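/- Under hypothesis (H1): for any subsets, if A - B ⊆ A then φ_{A,k} is B-monotone (y² - y¹ ∈ B implies φ_{A,k}(y¹) ≤ φ_{A,k}(y²) for y¹, y² in the domain). Conversely, if A - B ⊆ ℝk + A and φ_{A,k} is B-monotone, then A - B ⊆ A. -/

import Mathlib

open Set Pointwise

noncomputable def phiF {Y : Type*} [AddCommGroup Y] [Module ℝ Y] (A : Set Y) (k : Y) (y : Y) : EReal :=
  sInf ((fun t : ℝ => (t : EReal)) '' {t : ℝ | y - t • k ∈ A})

def recCone {Y : Type*} [AddCommGroup Y] [Module ℝ Y] (A : Set Y) : Set Y :=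
  {u | ∀ a ∈ A, ∀ t : ℝ, 0 ≤ t → a + t • u ∈ A}

def algInterior {Y : Type*} [AddCommGroup Y] [Module ℝ Y] (C : Set Y) : Set Y :=
  {x ∈ C | ∀ y : Y, ∃ ε : ℝ, 0 < ε ∧ ∀ t : ℝ, 0 ≤ t → t ≤ ε → x + t • y ∈ C}

theorem stmt_10 {Y : Type*} [AddCommGroup Y] [Module ℝ Y] [TopologicalSpace Y]
    [IsTopologicalAddGroup Y] [ContinuousSMul ℝ Y]
    (A : Set Y) (hAc : IsClosed A) (hAne : A.Nonempty) (hAp : A ≠ Set.univ)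
    (k : Y) (hk : k ≠ 0) (hrec : ∀ a ∈ A, ∀ t : ℝ, 0 ≤ t → a - t • k ∈ A)
    (B : Set Y) :
    ((∀ a ∈ A, ∀ b ∈ B, a - b ∈ A) →
      ∀ y₁ ∈ {y | ∃ t : ℝ, y - t • k ∈ A}, ∀ y₂ ∈ {y | ∃ t : ℝ, y - t • k ∈ A},
        y₂ - y₁ ∈ B → phiF A k y₁ ≤ phiF A k y₂) ∧
    ((∀ a ∈ A, ∀ b ∈ B, ∃ t : ℝ, (a - b) - t • k ∈ A) →
      (∀ y₁ ∈ {y | ∃ t : ℝ, y - t • k ∈ A}, ∀ y₂ ∈ {y | ∃ t : ℝ, y - t • k ∈ A},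
        y₂ - y₁ ∈ B → phiF A k y₁ ≤ phiF A k y₂) →
      ∀ a ∈ A, ∀ b ∈ B, a - b ∈ A) := by
  constructor
  · intro hAB y₁ _ y₂ _ hb
    apply sInf_le_sInf
    apply Set.image_mono
    intro t ht
    have h := hAB _ ht _ hb
    have heq : (y₂ - t • k) - (y₂ - y₁) = y₁ - t • k := by abel
    rwa [heq] at h
  · intro hABk hmono a ha b hb
    set S : Set ℝ := {t | (a - b) - t • k ∈ A} with hS
    have hSne : S.Nonempty := hABk a ha b hb
    have hupper : ∀ t ∈ S, ∀ t', t ≤ t' → t' ∈ S := by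
      intro t ht t' htt'
      have h := hrec _ ht (t' - t) (by linarith)
      have heq : (a - b) - t • k - (t' - t) • k = (a - b) - t' • k := by
        rw [sub_smul]; abel
      rwa [heq] at h
    by_contra h0
    have h0S : (0:ℝ) ∉ S := by simpa [hS] using h0
    have hbdd : BddBelow S := ⟨0, fun t ht => by
      by_contra hlt; push_neg at hlt
      exact h0S (hupper t ht 0 hlt.le)⟩
    have hSc : IsClosed S := hAc.preimage (by continuity)
    have hm := hSc.csInf_mem hSne hbdd
    have hmpos : 0 < sInf S := by
      rcases lt_or_ge 0 (sInf S) with h|h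
      · exact h
      · exact absurd (hupper _ hm 0 h) h0S
    have hφa : phiF A k a ≤ ((0:ℝ) : EReal) := by
      apply sInf_le
      exact ⟨0, by simpa using ha, rfl⟩
    have hdom1 : (a - b) ∈ {y | ∃ t : ℝ, y - t • k ∈ A} := hSne
    have hdom2 : a ∈ {y | ∃ t : ℝ, y - t • k ∈ A} := ⟨0, by simpa using ha⟩
    have hmono' := hmono _ hdom1 _ hdom2 (by simpa [sub_sub_cancel] using hb)
    have hle : ((sInf S : ℝ) : EReal) ≤ ((0:ℝ):EReal) := by
      calc ((sInf S : ℝ) : EReal) ≤ phiF A k (a - b) := by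
            apply le_sInf
            rintro x ⟨t, ht, rfl⟩
            simp only []; exact_mod_cast csInf_le hbdd ht
        _ ≤ phiF A k a := hmono'
        _ ≤ ((0:ℝ):EReal) := hφa
    have hfin : sInf S ≤ 0 := by exact_mod_cast hle
    linarith
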